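/- Let ε ∈ [0,1] and ρ ∈ (0,1), and let U, V be independent standard normal random variables. Define the single-observation likelihood ratio L₁ := 1 − ε + ε(1−ρ²)^{−1/2} exp(−ρU²/(2(1−ρ)) + ρV²/(2(1+ρ))). Then E[L₁²] = 1 + ε²ρ²/(1−ρ²). -/

import Mathlib

open MeasureTheory ProbabilityTheory Real Filter Topology

noncomputable section

/-- The standard normal distribution on ℝ. -/
def stdGauss : Measure ℝ := gaussianReal 0 1

/-- Two independent standard normals. -/
def stdGauss2 : Measure (ℝ × ℝ) := stdGauss.prod stdGauss

/-- `N(0, Σ_ρ)`: the centered bivariate normal with unit marginal variances and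
correlation `ρ`, i.e. the law of `(Z₁, ρ Z₁ + √(1-ρ²) Z₂)` for independent standard
normal `Z₁, Z₂`. -/
def biNormal (ρ : ℝ) : Measure (ℝ × ℝ) :=
  stdGauss2.map fun z => (z.1, ρ * z.1 + Real.sqrt (1 - ρ ^ 2) * z.2)

/-- The contamination mixture `P_{ε,ρ} = (1-ε) N(0,Σ₀) + ε N(0,Σ_ρ)`. -/
def mixture (ε ρ : ℝ) : Measure (ℝ × ℝ) :=
  ENNReal.ofReal (1 - ε) • biNormal 0 + ENNReal.ofReal ε • biNormal ρ

/-- The `n`-fold product (i.i.d.) measure. -/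
def iid (n : ℕ) (μ : Measure (ℝ × ℝ)) : Measure (Fin n → ℝ × ℝ) :=
  Measure.pi fun _ => μ
/-- The single-observation likelihood ratio `dP_{ε,ρ}/dN(0,Σ₀)` in the rotated
coordinates `U = (X-Y)/√2`, `V = (X+Y)/√2`, evaluated at `p = (U,V)`. -/
def L1 (ε ρ : ℝ) (p : ℝ × ℝ) : ℝ :=
  1 - ε + ε * (Real.sqrt (1 - ρ ^ 2))⁻¹ *
    Real.exp (-(ρ * p.1 ^ 2) / (2 * (1 - ρ)) + ρ * p.2 ^ 2 / (2 * (1 + ρ)))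

/-- the second moment of the single-observation likelihood ratio under the
null (where `U, V` are independent standard normals) is `1 + ε²ρ²/(1-ρ²)`. -/

lemma stdGauss_eq : stdGauss = MeasureTheory.Measure.withDensity volume
    (fun x => ENNReal.ofReal (gaussianPDFReal 0 1 x)) := by
  rw [stdGauss, gaussianReal_of_var_ne_zero _ one_ne_zero]; rfl

lemma integral_stdGauss (g : ℝ → ℝ) :
    ∫ x, g x ∂stdGauss = ∫ x, gaussianPDFReal 0 1 x * g x := by
  rw [stdGauss_eq]
  rw [show (fun x => ENNReal.ofReal (gaussianPDFReal 0 1 x))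
      = fun x => ((gaussianPDFReal 0 1 x).toNNReal : ENNReal) from rfl]
  rw [integral_withDensity_eq_integral_smul
    ((measurable_gaussianPDFReal 0 1).real_toNNReal) g]
  congr 1; ext x
  simp [NNReal.smul_def, Real.coe_toNNReal _ (gaussianPDFReal_nonneg 0 1 x)]

lemma gauss_density_exp (c x : ℝ) :
    gaussianPDFReal 0 1 x * Real.exp (c * x ^ 2)
      = (Real.sqrt (2 * π))⁻¹ * Real.exp (-(1/2 - c) * x ^ 2) := by
  simp only [gaussianPDFReal]
  rw [mul_assoc, ← Real.exp_add]
  congr 1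
  · norm_num
  · push_cast
    ring

lemma integrable_exp_sq_gauss {c : ℝ} (hc : c < 1/2) :
    Integrable (fun x => Real.exp (c * x ^ 2)) stdGauss := by
  rw [stdGauss_eq]
  rw [show (fun x => ENNReal.ofReal (gaussianPDFReal 0 1 x))
      = fun x => ((gaussianPDFReal 0 1 x).toNNReal : ENNReal) from rfl]
  rw [integrable_withDensity_iff_integrable_smul
    ((measurable_gaussianPDFReal 0 1).real_toNNReal)]
  have : (fun x => ((gaussianPDFReal 0 1 x).toNNReal : NNReal) • Real.exp (c * x ^ 2))
      = fun x => (Real.sqrt (2 * π))⁻¹ * Real.exp (-(1/2 - c) * x ^ 2) := by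
    funext x
    rw [← gauss_density_exp c x]
    simp [NNReal.smul_def, Real.coe_toNNReal _ (gaussianPDFReal_nonneg 0 1 x)]
  rw [this]
  exact (integrable_exp_neg_mul_sq (by linarith)).const_mul _

lemma integral_exp_sq_gauss {c : ℝ} (hc : c < 1/2) :
    ∫ x, Real.exp (c * x ^ 2) ∂stdGauss = (Real.sqrt (1 - 2 * c))⁻¹ := by
  rw [integral_stdGauss]
  simp_rw [gauss_density_exp c]
  rw [integral_const_mul, integral_gaussian]
  have hb : (0:ℝ) < 1/2 - c := by linarith
  rw [show (1:ℝ) - 2 * c = 2 * (1/2 - c) by ring, Real.sqrt_mul (by norm_num : (0:ℝ) ≤ 2),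
    Real.sqrt_mul (by norm_num : (0:ℝ) ≤ 2), Real.sqrt_div pi_pos.le]
  have h1 : Real.sqrt π ≠ 0 := by positivity
  have h2 : Real.sqrt (1/2 - c) ≠ 0 := by positivity
  have h3 : Real.sqrt 2 ≠ 0 := by positivity
  rw [mul_inv, div_eq_mul_inv, mul_inv,
    show (Real.sqrt 2)⁻¹ * (Real.sqrt π)⁻¹ * (Real.sqrt π * (Real.sqrt (1/2 - c))⁻¹)
      = (Real.sqrt π * (Real.sqrt π)⁻¹) * ((Real.sqrt 2)⁻¹ * (Real.sqrt (1/2 - c))⁻¹) by ring,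
    mul_inv_cancel₀ h1, one_mul]

instance : IsProbabilityMeasure stdGauss :=
  inferInstanceAs (IsProbabilityMeasure (gaussianReal 0 1))

instance : SFinite stdGauss := inferInstanceAs (SFinite (gaussianReal 0 1))

instance : IsProbabilityMeasure stdGauss2 := by
  unfold stdGauss2; infer_instance

theorem second_moment_L1 (ε ρ : ℝ) (hε : ε ∈ Set.Icc (0 : ℝ) 1) (hρ : ρ ∈ Set.Ioo (0 : ℝ) 1) :
    ∫ p, (L1 ε ρ p) ^ 2 ∂stdGauss2 = 1 + ε ^ 2 * ρ ^ 2 / (1 - ρ ^ 2) := by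
  obtain ⟨hρ0, hρ1⟩ := hρ
  have h1ρ : (0:ℝ) < 1 - ρ := by linarith
  have h1ρ' : (0:ℝ) < 1 + ρ := by linarith
  have hsq : (0:ℝ) < 1 - ρ ^ 2 := by nlinarith
  set a : ℝ := 1 - ε with ha
  set b : ℝ := ε * (Real.sqrt (1 - ρ ^ 2))⁻¹ with hb
  set α : ℝ := -(ρ / (2 * (1 - ρ))) with hα
  set β : ℝ := ρ / (2 * (1 + ρ)) with hβ
  have hαlt : α < 1/2 := by
    have : 0 < ρ / (2 * (1 - ρ)) := by positivity
    simp only [hα]; linarith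
  have h2αlt : 2 * α < 1/2 := by
    have : 0 < ρ / (2 * (1 - ρ)) := by positivity
    simp only [hα]; linarith
  have hβlt : β < 1/2 := by
    rw [hβ, div_lt_iff₀ (by positivity)]; linarith
  have h2βlt : 2 * β < 1/2 := by
    rw [hβ, mul_div_assoc', div_lt_iff₀ (by positivity)]; linarith
  have hsne : Real.sqrt (1 - ρ ^ 2) ≠ 0 := by positivity
  -- pointwise expansion
  have expand : ∀ p : ℝ × ℝ, (L1 ε ρ p) ^ 2
      = a ^ 2 + (2 * a * b) * (Real.exp (α * p.1 ^ 2) * Real.exp (β * p.2 ^ 2))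
        + b ^ 2 * (Real.exp ((2 * α) * p.1 ^ 2) * Real.exp ((2 * β) * p.2 ^ 2)) := by
    intro p
    have e1 : -(ρ * p.1 ^ 2) / (2 * (1 - ρ)) + ρ * p.2 ^ 2 / (2 * (1 + ρ))
        = α * p.1 ^ 2 + β * p.2 ^ 2 := by rw [hα, hβ]; ring
    have e2 : (2 * α) * p.1 ^ 2 + (2 * β) * p.2 ^ 2
        = (α * p.1 ^ 2 + β * p.2 ^ 2) + (α * p.1 ^ 2 + β * p.2 ^ 2) := by ring
    have h3 : Real.exp (α * p.1 ^ 2) * Real.exp (β * p.2 ^ 2)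
        = Real.exp (α * p.1 ^ 2 + β * p.2 ^ 2) := (Real.exp_add _ _).symm
    have h4 : Real.exp ((2 * α) * p.1 ^ 2) * Real.exp ((2 * β) * p.2 ^ 2)
        = Real.exp (α * p.1 ^ 2 + β * p.2 ^ 2) * Real.exp (α * p.1 ^ 2 + β * p.2 ^ 2) := by
      rw [← Real.exp_add, ← Real.exp_add]; congr 1 <;> ring
    rw [L1, e1, h3, h4]
    ring
  -- integrability
  have hfα := integrable_exp_sq_gauss hαlt
  have hf2α := integrable_exp_sq_gauss h2αlt
  have hgβ := integrable_exp_sq_gauss hβlt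
  have hg2β := integrable_exp_sq_gauss h2βlt
  have I2 : Integrable (fun p : ℝ × ℝ => Real.exp (α * p.1 ^ 2) * Real.exp (β * p.2 ^ 2))
      stdGauss2 := hfα.mul_prod hgβ
  have I3 : Integrable (fun p : ℝ × ℝ =>
      Real.exp ((2 * α) * p.1 ^ 2) * Real.exp ((2 * β) * p.2 ^ 2)) stdGauss2 :=
    hf2α.mul_prod hg2β
  have Isum : Integrable (fun p : ℝ × ℝ =>
      a ^ 2 + 2 * a * b * (Real.exp (α * p.1 ^ 2) * Real.exp (β * p.2 ^ 2))) stdGauss2 := by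
    exact (integrable_const _).add (I2.const_mul _)
  have Ic2 : Integrable (fun p : ℝ × ℝ =>
      b ^ 2 * (Real.exp ((2 * α) * p.1 ^ 2) * Real.exp ((2 * β) * p.2 ^ 2))) stdGauss2 := by
    exact I3.const_mul _
  have Ic1 : Integrable (fun p : ℝ × ℝ =>
      2 * a * b * (Real.exp (α * p.1 ^ 2) * Real.exp (β * p.2 ^ 2))) stdGauss2 := by
    exact I2.const_mul _
  rw [integral_congr_ae (ae_of_all _ expand)]
  rw [integral_add Isum Ic2, integral_add (integrable_const _) Ic1,
    integral_const_mul, integral_const_mul, integral_const]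
  have hprod2 : ∫ p : ℝ × ℝ, Real.exp (α * p.1 ^ 2) * Real.exp (β * p.2 ^ 2) ∂stdGauss2
      = Real.sqrt (1 - ρ) * Real.sqrt (1 + ρ) := by
    unfold stdGauss2
    rw [integral_prod_mul (μ := stdGauss) (ν := stdGauss) (f := fun u => Real.exp (α * u ^ 2))
      (g := fun v => Real.exp (β * v ^ 2)), integral_exp_sq_gauss hαlt,
      integral_exp_sq_gauss hβlt]
    rw [show 1 - 2 * α = (1 - ρ)⁻¹ by rw [hα]; field_simp; ring,
      show 1 - 2 * β = (1 + ρ)⁻¹ by rw [hβ]; field_simp; ring,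
      Real.sqrt_inv, Real.sqrt_inv, inv_inv, inv_inv]
  have hprod3 : ∫ p : ℝ × ℝ,
      Real.exp ((2 * α) * p.1 ^ 2) * Real.exp ((2 * β) * p.2 ^ 2) ∂stdGauss2 = 1 := by
    unfold stdGauss2
    rw [integral_prod_mul (μ := stdGauss) (ν := stdGauss)
      (f := fun u => Real.exp ((2 * α) * u ^ 2)) (g := fun v => Real.exp ((2 * β) * v ^ 2)),
      integral_exp_sq_gauss h2αlt, integral_exp_sq_gauss h2βlt]
    have h4α : (0:ℝ) ≤ 1 - 2 * (2 * α) := by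
      rw [hα]
      have h := div_pos hρ0 (by linarith : (0:ℝ) < 2 * (1 - ρ))
      linarith
    rw [← mul_inv, ← Real.sqrt_mul h4α]
    rw [show (1 - 2 * (2 * α)) * (1 - 2 * (2 * β)) = (1 + ρ) / (1 - ρ) * ((1 - ρ) / (1 + ρ)) by
      rw [hα, hβ]; field_simp; ring]
    rw [div_mul_div_comm, mul_comm (1 + ρ) (1 - ρ), div_self (by positivity), Real.sqrt_one,
      inv_one]
  rw [hprod2, hprod3]
  have hcross : 2 * a * b * (Real.sqrt (1 - ρ) * Real.sqrt (1 + ρ)) = 2 * a * ε := by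
    rw [← Real.sqrt_mul h1ρ.le, show (1 - ρ) * (1 + ρ) = 1 - ρ ^ 2 by ring, hb]
    field_simp
  rw [hcross]
  have hb2 : b ^ 2 = ε ^ 2 / (1 - ρ ^ 2) := by
    rw [hb, mul_pow, inv_pow, Real.sq_sqrt hsq.le, div_eq_mul_inv]
  rw [hb2, ha]
  simp only [probReal_univ, measure_univ, ENNReal.toReal_one, smul_eq_mul]
  field_simp
  ring
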